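/- Let n be a positive integer and let A be a finite subset of the lattice ℤ^n with |A| = k ≥ 2. Then for every integer r ≥ 2, the set A is an asymptotic (r, k·b(r,k))-approximate group in ℤ^n: there exists an integer h_0 such that for every h ≥ h_0 there is a set Y ⊆ ℤ^n with |Y| ≤ k·b(r,k) and rhA ⊆ Y + hA. -/

import Mathlib

open Pointwise

/-- The `h`-fold sumset `hA = {a₁ + ⋯ + a_h : aᵢ ∈ A}`. -/
def hsum {V : Type*} [AddCommMonoid V] (h : ℕ) (A : Set V) : Set V :=
  {z | ∃ f : Fin h → V, (∀ i, f i ∈ A) ∧ z = ∑ i, f i}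

/-- The binomial coefficient `b(r,k) = C((r+1)(k-1)-1, k-1)`. -/
def b (r k : ℕ) : ℕ := Nat.choose ((r + 1) * (k - 1) - 1) (k - 1)

section AuxHsum

variable {V : Type*} [AddCommMonoid V]

lemma add_mem_hsum {A : Set V} {p q : ℕ} {x y : V}
    (hx : x ∈ hsum p A) (hy : y ∈ hsum q A) : x + y ∈ hsum (p + q) A := by
  obtain ⟨f, hf, rfl⟩ := hx
  obtain ⟨g, hg, rfl⟩ := hy
  refine ⟨Fin.append f g, fun i => ?_, ?_⟩
  · refine Fin.addCases (fun l => ?_) (fun l => ?_) i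
    · rw [Fin.append_left]; exact hf l
    · rw [Fin.append_right]; exact hg l
  · rw [Fin.sum_univ_add]
    simp [Fin.append_left, Fin.append_right]

lemma smul_mem_hsum {A : Set V} {x : V} (hx : x ∈ A) (c : ℕ) : c • x ∈ hsum c A :=
  ⟨fun _ => x, fun _ => hx, by simp⟩

lemma sum_smul_mem_hsum {k : ℕ} {A : Set V} {a : Fin k → V} (ha : ∀ i, a i ∈ A)
    (u : Fin k → ℕ) (s : Finset (Fin k)) :
    (∑ i ∈ s, u i • a i) ∈ hsum (∑ i ∈ s, u i) A := by
  classical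
  induction s using Finset.induction_on with
  | empty => exact ⟨fun i => i.elim0, fun i => i.elim0, by simp; exact (Finset.sum_eq_zero fun i _ => i.elim0).symm⟩
  | insert _ _ hns ih =>
    rw [Finset.sum_insert hns, Finset.sum_insert hns]
    exact add_mem_hsum (smul_mem_hsum (ha _) _) ih

lemma hsum_decomp {k : ℕ} {A : Set V} {a : Fin k → V} (hcov : A ⊆ Set.range a)
    {m : ℕ} {z : V} (hz : z ∈ hsum m A) :
    ∃ u : Fin k → ℕ, ∑ i, u i = m ∧ z = ∑ i, u i • a i := by
  classical
  obtain ⟨f, hf, rfl⟩ := hz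
  choose φ hφ using fun i => hcov (hf i)
  refine ⟨fun j => (Finset.univ.filter fun i => φ i = j).card, ?_, ?_⟩
  · rw [← Finset.card_eq_sum_card_fiberwise (fun x _ => Finset.mem_univ (φ x))]
    simp
  · rw [← Finset.sum_fiberwise_of_maps_to (fun x _ => Finset.mem_univ (φ x)) f]
    refine Finset.sum_congr rfl fun j _ => ?_
    rw [Finset.sum_congr rfl (fun i hi =>
      show f i = a j by rw [← hφ i, (Finset.mem_filter.mp hi).2]), Finset.sum_const]

end AuxHsum

lemma greedy_split {ι : Type*} (s : Finset ι) (w : ι → ℕ) (t : ℕ) (ht : t ≤ ∑ i ∈ s, w i) :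
    ∃ x : ι → ℕ, (∀ i, x i ≤ w i) ∧ (∀ i ∉ s, x i = 0) ∧ ∑ i ∈ s, x i = t := by
  classical
  induction s using Finset.induction_on generalizing t with
  | empty =>
    exact ⟨fun _ => 0, fun _ => Nat.zero_le _, fun _ _ => rfl, by simpa using ht.antisymm (Nat.zero_le t) ▸ by simp⟩
  | @insert a s ha ih =>
    rw [Finset.sum_insert ha] at ht
    obtain ⟨x, hx1, hx2, hx3⟩ := ih (t - min t (w a)) (by omega)
    refine ⟨Function.update x a (min t (w a)), fun i => ?_, fun i hi => ?_, ?_⟩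
    · rcases eq_or_ne i a with rfl | h
      · rw [Function.update_self]; exact min_le_right _ _
      · simpa [Function.update_of_ne h] using hx1 i
    · have h1 : i ≠ a := fun h => hi (h ▸ Finset.mem_insert_self a s)
      have h2 : i ∉ s := fun h => hi (Finset.mem_insert_of_mem h)
      simp [Function.update_of_ne h1, hx2 i h2]
    · rw [Finset.sum_insert ha, Function.update_self,
        Finset.sum_congr rfl (fun i hi => Function.update_of_ne (fun h => ha (by rwa [h] at hi)) _ x), hx3]
      omega

lemma card_bounded_sum_le (m N : ℕ) :
    ((Fintype.piFinset fun _ : Fin m => Finset.range (N + 1)).filter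
      fun y => ∑ i, y i ≤ N).card ≤ (N + m).choose m := by
  classical
  set F : (Fin m → ℕ) → Multiset (Fin (m + 1)) :=
    fun y => ∑ i : Fin (m + 1), ((Fin.snoc y (N - ∑ l, y l) : Fin (m+1) → ℕ) i) • ({i} : Multiset (Fin (m + 1)))
    with hF
  have hcount : ∀ y (i : Fin (m + 1)), Multiset.count i (F y)
      = (Fin.snoc y (N - ∑ l, y l) : Fin (m+1) → ℕ) i := by
    intro y i
    rw [hF]
    rw [Multiset.count_sum']
    simp only [Multiset.count_nsmul, Multiset.count_singleton]
    simp only [mul_ite, mul_one, mul_zero]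
    rw [Finset.sum_ite_eq]
    simp
  have hcard : ∀ y, (∑ l, y l ≤ N) → Multiset.card (F y) = N := by
    intro y hy
    rw [hF]
    rw [Multiset.card_sum]
    simp only [Multiset.card_nsmul, Multiset.card_singleton, mul_one]
    rw [Fin.sum_univ_castSucc]
    simp only [Fin.snoc_castSucc, Fin.snoc_last]
    omega
  have hinj : ∀ y y', (∑ l, y l ≤ N) → F y = F y' → y = y' := by
    intro y y' _ h
    funext i
    have := hcount y i.castSucc
    rw [h, hcount y' i.castSucc] at this
    simpa [Fin.snoc_castSucc] using this.symm
  calc ((Fintype.piFinset fun _ : Fin m => Finset.range (N + 1)).filter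
      fun y => ∑ i, y i ≤ N).card
      ≤ (Finset.univ : Finset (Sym (Fin (m + 1)) N)).card := by
        refine Finset.card_le_card_of_injOn
          (fun y => if h : ∑ l, y l ≤ N then ⟨F y, hcard y h⟩ else Sym.replicate N 0)
          (fun y _ => Finset.mem_univ _) ?_
        intro y hy y' hy' hFy
        simp only [Finset.coe_filter, Set.mem_setOf_eq] at hy hy'
        simp only [dif_pos hy.2, dif_pos hy'.2] at hFy
        exact hinj y y' hy.2 (by simpa [hy.2, hy'.2] using congrArg Subtype.val hFy)
    _ = (N + m).choose m := by
        rw [Finset.card_univ, Sym.card_sym_eq_choose, Fintype.card_fin]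
        have h1 : m + 1 + N - 1 = N + m := by omega
        rw [h1, ← Nat.choose_symm (Nat.le_add_left m N)]
        congr 1
        omega

lemma card_Xset_le (m N : ℕ) (j : Fin (m + 1)) :
    ((Fintype.piFinset fun _ : Fin (m + 1) => Finset.range (N + 1)).filter
      fun x => x j = 0 ∧ ∑ i, x i ≤ N).card ≤ (N + m).choose m := by
  classical
  refine le_trans (Finset.card_le_card_of_injOn (fun x => x ∘ j.succAbove) ?_ ?_)
    (card_bounded_sum_le m N)
  · intro x hx
    simp only [Finset.mem_coe, Finset.mem_filter, Fintype.mem_piFinset, Finset.mem_range] at hx ⊢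
    obtain ⟨hb, hj0, hsum⟩ := hx
    refine ⟨fun i => hb _, ?_⟩
    have := Fin.sum_univ_succAbove x j
    rw [hj0, zero_add] at this
    simp only [Function.comp]
    omega
  · intro x hx x' hx' h
    simp only [Finset.coe_filter, Set.mem_setOf_eq] at hx hx'
    funext i
    rcases eq_or_ne i j with rfl | hij
    · rw [hx.2.1, hx'.2.1]
    · obtain ⟨l, rfl⟩ := Fin.exists_succAbove_eq hij
      exact congrFun h l
lemma main_comb (r h m : ℕ) (hr : 2 ≤ r) (hh : r * (m + 2) ≤ h)
    (u : Fin (m + 2) → ℕ) (hu : ∑ i, u i = r * h) :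
    ∃ (j : Fin (m + 2)) (x : Fin (m + 2) → ℕ),
      x j = 0 ∧ ∑ i, x i ≤ r * (m + 1) - 1 ∧
      (∀ i, (if i = j then (r - 1) * h - (h / (m + 1)) * ∑ l, x l
             else (h / (m + 1)) * x i) ≤ u i) ∧
      ∑ i, (if i = j then (r - 1) * h - (h / (m + 1)) * ∑ l, x l
            else (h / (m + 1)) * x i) = (r - 1) * h := by
  classical
  obtain ⟨r', rfl⟩ : ∃ r', r = r' + 2 := ⟨r - 2, by omega⟩
  have hr1 : r' + 2 - 1 = r' + 1 := by omega
  rw [hr1] at *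
  set g := h / (m + 1) with hgdef
  have hgle : (m + 1) * g ≤ h := by
    rw [hgdef, mul_comm]; exact Nat.div_mul_le_self h (m + 1)
  have hmod : (m + 1) * g + h % (m + 1) = h := Nat.div_add_mod h (m + 1)
  have hmodlt : h % (m + 1) < m + 1 := Nat.mod_lt _ (by omega)
  have hrg : r' + 2 ≤ g := by
    rw [hgdef, Nat.le_div_iff_mul_le (by omega : 0 < m + 1)]
    calc (r' + 2) * (m + 1) ≤ (r' + 2) * (m + 2) := by nlinarith
      _ ≤ h := hh
  have hgpos : 0 < g := by omega
  -- pick the index with maximal u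
  obtain ⟨j, -, hjmax⟩ := Finset.exists_max_image Finset.univ u ⟨0, Finset.mem_univ 0⟩
  have hkuj : (r' + 2) * h ≤ (m + 2) * u j := by
    rw [← hu]
    calc ∑ i, u i ≤ ∑ _i : Fin (m + 2), u j :=
          Finset.sum_le_sum fun i _ => hjmax i (Finset.mem_univ i)
      _ = (m + 2) * u j := by simp [Finset.sum_const, mul_comm]
  have hujg : g ≤ u j := by
    have e1 : (m + 2) * g ≤ (m + 2) * u j := by
      have e2 : g ≤ (m + 1) * g := Nat.le_mul_of_pos_left g (by omega)
      have e3 : 2 * h ≤ (r' + 2) * h := Nat.mul_le_mul_right h (by omega)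
      have e4 : (m + 2) * g = (m + 1) * g + g := by ring
      omega
    exact Nat.le_of_mul_le_mul_left e1 (by omega)
  set q := (r' + 1) * h with hqdef
  have hq : q + h = (r' + 2) * h := by rw [hqdef]; ring
  set mi : Fin (m + 2) → ℕ := fun i => u i / g with hmi
  set T := min (q / g) (∑ i ∈ Finset.univ.erase j, mi i) with hT
  obtain ⟨x, hx1, hx2, hx3⟩ := greedy_split (Finset.univ.erase j) mi T (min_le_right _ _)
  have hxj : x j = 0 := hx2 j (Finset.notMem_erase j Finset.univ)
  have hsxT : ∑ i, x i = T := by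
    rw [← Finset.add_sum_erase _ x (Finset.mem_univ j), hxj, hx3, zero_add]
  have hgTq : g * T ≤ q := by
    calc g * T ≤ g * (q / g) := Nat.mul_le_mul_left g (min_le_left _ _)
      _ ≤ q := Nat.mul_div_le q g
  have hc_le : ∀ i, g * (u i / g) ≤ u i := fun i => Nat.mul_div_le (u i) g
  -- q ≤ u j + g * T
  have hdj : q ≤ u j + g * T := by
    rcases le_total (q / g) (∑ i ∈ Finset.univ.erase j, mi i) with hc | hc
    · have hTe : T = q / g := min_eq_left hc
      have e5 : g * (q / g) + q % g = q := Nat.div_add_mod q g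
      have e6 : q % g < g := Nat.mod_lt _ hgpos
      rw [hTe]
      omega
    · have hTe : T = ∑ i ∈ Finset.univ.erase j, mi i := min_eq_right hc
      have hs1 : g * T = ∑ i ∈ Finset.univ.erase j, g * mi i := by
        rw [hTe, Finset.mul_sum]
      have hs3 : ∑ i ∈ Finset.univ.erase j, u i
          ≤ (∑ i ∈ Finset.univ.erase j, g * mi i) + (m + 1) * (g - 1) := by
        calc ∑ i ∈ Finset.univ.erase j, u i
            ≤ ∑ i ∈ Finset.univ.erase j, (g * mi i + (g - 1)) := by
              refine Finset.sum_le_sum fun i _ => ?_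
              have := Nat.div_add_mod (u i) g
              have := Nat.mod_lt (u i) hgpos
              simp only [hmi]
              omega
          _ = (∑ i ∈ Finset.univ.erase j, g * mi i) + (m + 1) * (g - 1) := by
              rw [Finset.sum_add_distrib, Finset.sum_const,
                Finset.card_erase_of_mem (Finset.mem_univ j)]
              simp [Finset.card_univ, mul_comm]
      have hs4 : u j + ∑ i ∈ Finset.univ.erase j, u i = (r' + 2) * h := by
        rw [Finset.add_sum_erase _ u (Finset.mem_univ j), hu]
      have hs5 : (m + 1) * (g - 1) + (m + 1) * 1 = (m + 1) * g := by
        rw [← Nat.mul_add]; congr 1; omega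
      omega
  -- bound on T
  have hTb : T ≤ (r' + 2) * (m + 1) - 1 := by
    have hqdiv : q / g < (r' + 2) * (m + 1) := by
      rw [Nat.div_lt_iff_lt_mul hgpos]
      have e4 : h ≤ (m + 1) * g + m := by omega
      have e5 : (r' + 1) * h ≤ (r' + 1) * ((m + 1) * g + m) :=
        Nat.mul_le_mul_left _ e4
      have e6 : (r' + 1) * ((m + 1) * g + m)
          = (r' + 1) * ((m + 1) * g) + (r' + 1) * m := by ring
      have e7 : (r' + 2) * (m + 1) * g
          = (r' + 1) * ((m + 1) * g) + (m + 1) * g := by ring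
      have e8 : (m + 1) * (r' + 2) ≤ (m + 1) * g := Nat.mul_le_mul_left _ hrg
      have e9 : (m + 1) * (r' + 2) = (r' + 1) * m + (m + r' + 2) := by ring
      omega
    have := min_le_left (q / g) (∑ i ∈ Finset.univ.erase j, mi i)
    omega
  refine ⟨j, x, hxj, by rw [hsxT]; omega, fun i => ?_, ?_⟩
  · rcases eq_or_ne i j with rfl | hij
    · rw [if_pos rfl, hsxT]
      omega
    · rw [if_neg hij]
      calc g * x i ≤ g * mi i := Nat.mul_le_mul_left g (hx1 i)
        _ ≤ u i := hc_le i
  · rw [← Finset.add_sum_erase _ _ (Finset.mem_univ j), if_pos rfl, hsxT,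
      Finset.sum_congr rfl (fun i hi => if_neg (Finset.ne_of_mem_erase hi)),
      ← Finset.mul_sum, hx3]
    omega

/-- Every finite set `A` of `k ≥ 2` lattice points in `ℤⁿ` is an asymptotic
`(r, k·b(r,k))`-approximate group for every `r ≥ 2`. -/
theorem lattice_asymptotic_approximate_group (n : ℕ) (hn : 0 < n)
    (A : Set (Fin n → ℤ)) (hA : A.Finite) (k : ℕ) (hk : A.ncard = k) (hk2 : 2 ≤ k)
    (r : ℕ) (hr : 2 ≤ r) :
    ∃ h₀ : ℕ, ∀ h : ℕ, h₀ ≤ h →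
      ∃ Y : Finset (Fin n → ℤ), Y.card ≤ k * b r k ∧
        hsum (r * h) A ⊆ ↑Y + hsum h A := by
  classical
  obtain ⟨m, rfl⟩ : ∃ m, k = m + 2 := ⟨k - 2, by omega⟩
  -- enumerate A
  have hcard : hA.toFinset.card = m + 2 := by
    rw [← Set.ncard_eq_toFinset_card A hA, hk]
  set e := hA.toFinset.equivFin with he
  set a : Fin (m + 2) → (Fin n → ℤ) :=
    fun i => (e.symm (Fin.cast hcard.symm i) : Fin n → ℤ) with ha_def
  have ha : ∀ i, a i ∈ A := fun i => hA.mem_toFinset.mp (e.symm _).2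
  have hcov : A ⊆ Set.range a := by
    intro z hz
    refine ⟨Fin.cast hcard (e ⟨z, hA.mem_toFinset.mpr hz⟩), ?_⟩
    simp [ha_def]
  -- the key quantities
  set N := r * (m + 1) - 1 with hN
  have hbN : (N + (m + 1)).choose (m + 1) = b r (m + 2) := by
    have h1 : 0 < r * (m + 1) := Nat.mul_pos (by omega) (by omega)
    have h2 : (r + 1) * (m + 1) = r * (m + 1) + (m + 1) := by ring
    have h3 : N + (m + 1) = (r + 1) * (m + 1) - 1 := by omega
    simp only [b, show m + 2 - 1 = m + 1 from rfl]
    rw [h3]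
  refine ⟨r * (m + 2), fun h hh => ?_⟩
  set Y : Finset (Fin n → ℤ) := Finset.univ.biUnion (fun j : Fin (m + 2) =>
    ((Fintype.piFinset fun _ : Fin (m + 2) => Finset.range (N + 1)).filter
      fun x => x j = 0 ∧ ∑ i, x i ≤ N).image
      (fun x => ∑ i, (if i = j then (r - 1) * h - (h / (m + 1)) * ∑ l, x l else (h / (m + 1)) * x i) • a i))
    with hY
  refine ⟨Y, ?_, ?_⟩
  · calc Y.card ≤ ∑ j : Fin (m + 2),
        (((Fintype.piFinset fun _ : Fin (m + 2) => Finset.range (N + 1)).filter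
          fun x => x j = 0 ∧ ∑ i, x i ≤ N).image
          (fun x => ∑ i, (if i = j then (r - 1) * h - (h / (m + 1)) * ∑ l, x l else (h / (m + 1)) * x i) • a i)).card :=
        Finset.card_biUnion_le
      _ ≤ ∑ _j : Fin (m + 2), b r (m + 2) := by
        refine Finset.sum_le_sum fun j _ => ?_
        exact le_trans (Finset.card_image_le) (le_of_le_of_eq (card_Xset_le (m + 1) N j) hbN)
      _ = (m + 2) * b r (m + 2) := by simp [mul_comm]
  · intro z hz
    obtain ⟨u, hu, rfl⟩ := hsum_decomp hcov hz
    obtain ⟨j, x, hxj, hxsum, hcle, hcsum⟩ := main_comb r h m hr hh u hu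
    set c : Fin (m + 2) → ℕ :=
      fun i => if i = j then (r - 1) * h - (h / (m + 1)) * ∑ l, x l else (h / (m + 1)) * x i with hc
    replace hcle : ∀ i, c i ≤ u i := fun i => by simpa only [hc] using hcle i
    replace hcsum : ∑ i, c i = (r - 1) * h := by simpa only [hc] using hcsum
    have hxmem : x ∈ (Fintype.piFinset fun _ : Fin (m + 2) => Finset.range (N + 1)).filter
        fun x => x j = 0 ∧ ∑ i, x i ≤ N := by
      rw [Finset.mem_filter]
      refine ⟨?_, hxj, hxsum⟩
      rw [Fintype.mem_piFinset]
      intro i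
      rw [Finset.mem_range]
      have : x i ≤ ∑ l, x l := Finset.single_le_sum (fun l _ => Nat.zero_le (x l)) (Finset.mem_univ i)
      omega
    have hydef : (∑ i, c i • a i) ∈ Y := by
      rw [hY]
      refine Finset.mem_biUnion.mpr ⟨j, Finset.mem_univ j, Finset.mem_image.mpr ⟨x, hxmem, rfl⟩⟩
    have hsplit : ∑ i, u i • a i = (∑ i, c i • a i) + ∑ i, (u i - c i) • a i := by
      rw [← Finset.sum_add_distrib]
      refine Finset.sum_congr rfl fun i _ => ?_
      rw [← add_smul]
      congr 1
      have := hcle i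
      omega
    have hsc : ∑ i, (u i - c i) = h := by
      have h1 : ∑ i, ((u i - c i) + c i) = ∑ i, u i :=
        Finset.sum_congr rfl fun i _ => by have := hcle i; omega
      rw [Finset.sum_add_distrib] at h1
      have h2 : (r - 1) * h + h = r * h := by
        have h3 : r - 1 + 1 = r := by omega
        calc (r - 1) * h + h = (r - 1 + 1) * h := by ring
          _ = r * h := by rw [h3]
      rw [hcsum, hu] at h1
      omega
    have hw : (∑ i, (u i - c i) • a i) ∈ hsum h A := by
      have := sum_smul_mem_hsum ha (fun i => u i - c i) Finset.univ
      rwa [hsc] at this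
    rw [hsplit]
    exact Set.add_mem_add hydef hw
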